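/- Let K be an imaginary quadratic field with ring of integers O_K having Euclidean minimum μ(O_K) = μ < 1, and let L be a Hermitian O_K-lattice of rank 2 with positive definite Hermitian form h and Hermitian minimum m = min{h(v,v) : v ∈ L, v ≠ 0}. Then the discriminant d_L of L satisfies d_L ≥ m²(1 − μ). -/

import Mathlib

open Matrix Complex
open scoped ComplexOrder
set_option maxHeartbeats 1000000
set_option synthInstance.maxHeartbeats 400000

section AuxStmt2

variable {K : Subfield ℂ} {w : ℂ} {a b : ℚ} {O : Set ℂ} {μ : ℝ}

lemma stmt2_Kbasis (K : Subfield ℂ) (hdeg : Module.finrank ℚ K = 2)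
    (himag : ¬ (K : Set ℂ) ⊆ Set.range (Complex.ofReal)) :
    ∃ w : ℂ, w ∈ K ∧ w.im ≠ 0 ∧ ∀ z ∈ K, ∃ p q : ℚ, z = (p : ℂ) + (q : ℂ) * w := by
  rw [Set.not_subset] at himag
  obtain ⟨w, hwK, hw⟩ := himag
  have hwim : w.im ≠ 0 := by
    intro h
    exact hw ⟨w.re, by apply Complex.ext <;> simp [h]⟩
  refine ⟨w, hwK, hwim, ?_⟩
  set f : Fin 2 → K := ![1, ⟨w, hwK⟩] with hf
  have hli : LinearIndependent ℚ f := by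
    rw [linearIndependent_fin2]
    constructor
    · intro h
      apply hwim
      have := congrArg (fun z : K => (z : ℂ).im) h
      simpa [hf] using this
    · intro a h
      apply hwim
      have := congrArg (fun z : K => (z : ℂ).im) h
      simp [hf, Rat.smul_def] at this
      rcases this with h0 | h0
      · exfalso
        rw [h0, zero_smul] at h
        have : (1 : ↥K) = 0 := by simpa [hf] using h.symm
        exact one_ne_zero this
      · exact h0
  set hb := basisOfLinearIndependentOfCardEqFinrank hli (by simp [hdeg] : Fintype.card (Fin 2) = Module.finrank ℚ ↥K) with hbdef
  intro z hz
  have := hb.sum_repr ⟨z, hz⟩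
  rw [Fin.sum_univ_two] at this
  refine ⟨hb.repr ⟨z, hz⟩ 0, hb.repr ⟨z, hz⟩ 1, ?_⟩
  have hcoord : ∀ i, hb i = f i := fun i => congrFun (coe_basisOfLinearIndependentOfCardEqFinrank hli _) i
  rw [hcoord 0, hcoord 1] at this
  have := congrArg (Subfield.subtype K) this
  simpa [hf, Rat.smul_def, mul_comm] using this.symm

lemma stmt2_real_rat (hwim : w.im ≠ 0)
    (hrep : ∀ z ∈ K, ∃ p q : ℚ, z = (p : ℂ) + (q : ℂ) * w)
    {z : ℂ} (hz : z ∈ K) (him : z.im = 0) : ∃ q : ℚ, z = (q : ℂ) := by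
  obtain ⟨p, q, hpq⟩ := hrep z hz
  have : z.im = (q : ℝ) * w.im := by rw [hpq]; simp
  rw [him] at this
  have hq : (q : ℝ) = 0 := by
    rcases mul_eq_zero.mp this.symm with h | h
    · exact h
    · exact absurd h hwim
  refine ⟨p, ?_⟩
  rw [hpq]
  have : (q : ℂ) = 0 := by exact_mod_cast hq
  rw [this, zero_mul, add_zero]

lemma stmt2_conj_w (hwim : w.im ≠ 0) (hab : w ^ 2 = (a : ℂ) + (b : ℂ) * w) :
    (starRingEnd ℂ) w = (b : ℂ) - w := by
  have h1 : ((starRingEnd ℂ) w) ^ 2 = (a : ℂ) + (b : ℂ) * (starRingEnd ℂ) w := by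
    have := congrArg (starRingEnd ℂ) hab
    simpa using this
  have key : ((starRingEnd ℂ) w - w) * ((starRingEnd ℂ) w - ((b : ℂ) - w)) = 0 := by
    linear_combination h1 - hab
  rcases mul_eq_zero.mp key with h | h
  · exfalso
    apply hwim
    have h2 : (starRingEnd ℂ) w = w := sub_eq_zero.mp h
    have := congrArg Complex.im h2
    simp at this
    linarith
  · exact sub_eq_zero.mp h

lemma stmt2_conj_mem (hwK : w ∈ K) (hcw : (starRingEnd ℂ) w = (b : ℂ) - w)
    (hrep : ∀ z ∈ K, ∃ p q : ℚ, z = (p : ℂ) + (q : ℂ) * w)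
    {z : ℂ} (hz : z ∈ K) : (starRingEnd ℂ) z ∈ K := by
  obtain ⟨p, q, hpq⟩ := hrep z hz
  rw [hpq]
  simp only [map_add, _root_.map_mul, map_ratCast, hcw]
  exact add_mem (SubfieldClass.ratCast_mem K p)
    (mul_mem (SubfieldClass.ratCast_mem K q) (sub_mem (SubfieldClass.ratCast_mem K b) hwK))

lemma stmt2_conj_integral {z : ℂ} (hz : IsIntegral ℤ z) : IsIntegral ℤ ((starRingEnd ℂ) z) :=
  IsIntegral.map ((starRingEnd ℂ).toIntAlgHom) hz

lemma stmt2_rat_int {q : ℚ} (h : IsIntegral ℤ ((q : ℂ))) : ∃ n : ℤ, (n : ℚ) = q := by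
  have h2 : IsIntegral ℤ q := by
    have hinj : Function.Injective (⇑(IsScalarTower.toAlgHom ℤ ℚ ℂ)) := fun x y hxy =>
      Rat.cast_injective (α := ℂ) (by simpa using hxy)
    apply (isIntegral_algHom_iff (IsScalarTower.toAlgHom ℤ ℚ ℂ) hinj).mp
    simpa using h
  obtain ⟨n, hn⟩ := IsIntegrallyClosed.isIntegral_iff.mp h2
  exact ⟨n, by exact_mod_cast hn⟩

lemma stmt2_normSq_int (hO : O = {z : ℂ | z ∈ K ∧ IsIntegral ℤ z})
    (hwim : w.im ≠ 0) (hwK : w ∈ K) (hcw : (starRingEnd ℂ) w = (b : ℂ) - w)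
    (hrep : ∀ z ∈ K, ∃ p q : ℚ, z = (p : ℂ) + (q : ℂ) * w)
    {z : ℂ} (hz : z ∈ O) : ∃ N : ℤ, normSq z = (N : ℝ) := by
  have hzK : z ∈ K := (hO ▸ hz).1
  have hzint : IsIntegral ℤ z := (hO ▸ hz).2
  have hprod : ((normSq z : ℝ) : ℂ) ∈ K := by
    rw [← Complex.mul_conj]
    exact mul_mem hzK (stmt2_conj_mem hwK hcw hrep hzK)
  have hprodint : IsIntegral ℤ ((normSq z : ℝ) : ℂ) := by
    rw [← Complex.mul_conj]
    exact hzint.mul (stmt2_conj_integral hzint)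
  obtain ⟨q, hq⟩ := stmt2_real_rat hwim hrep hprod (Complex.ofReal_im _)
  obtain ⟨n, hn⟩ := stmt2_rat_int (hq ▸ hprodint)
  refine ⟨n, ?_⟩
  have : ((normSq z : ℝ) : ℂ) = ((n : ℝ) : ℂ) := by rw [hq]; push_cast [← hn]; simp
  exact_mod_cast this

lemma stmt2_omega_integral (hab : w ^ 2 = (a : ℂ) + (b : ℂ) * w) :
    ∃ n : ℤ, 1 ≤ n ∧ IsIntegral ℤ ((n : ℂ) * w) := by
  set n : ℤ := (a.den : ℤ) * (b.den : ℤ) with hn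
  have hn1 : 1 ≤ n := by
    have ha : (1 : ℤ) ≤ (a.den : ℤ) := by exact_mod_cast a.den_pos
    have hb : (1 : ℤ) ≤ (b.den : ℤ) := by exact_mod_cast b.den_pos
    nlinarith
  set c1 : ℤ := b.num * a.den with hc1
  set c0 : ℤ := a.num * a.den * (b.den : ℤ) ^ 2 with hc0
  have hc1q : (c1 : ℚ) = (n : ℚ) * b := by
    rw [hc1, hn]
    push_cast
    rw [← Rat.mul_den_eq_num b]
    ring
  have hc0q : (c0 : ℚ) = (n : ℚ) ^ 2 * a := by
    rw [hc0, hn]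
    push_cast
    rw [← Rat.mul_den_eq_num a]
    ring
  refine ⟨n, hn1, ?_⟩
  refine ⟨Polynomial.X ^ 2 - (Polynomial.C c1 * Polynomial.X + Polynomial.C c0), ?_, ?_⟩
  · exact Polynomial.monic_X_pow_sub (lt_of_le_of_lt Polynomial.degree_linear_le
      (by norm_num))
  · simp only [Polynomial.eval₂_sub, Polynomial.eval₂_add, Polynomial.eval₂_mul,
      Polynomial.eval₂_pow, Polynomial.eval₂_X, Polynomial.eval₂_C]
    have e1 : ((c1 : ℚ) : ℂ) = (n : ℂ) * (b : ℂ) := by exact_mod_cast congrArg (fun q : ℚ => (q : ℂ)) hc1q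
    have e0 : ((c0 : ℚ) : ℂ) = (n : ℂ) ^ 2 * (a : ℂ) := by exact_mod_cast congrArg (fun q : ℚ => (q : ℂ)) hc0q
    have e1' : (algebraMap ℤ ℂ) c1 = (n : ℂ) * (b : ℂ) := by
      rw [show (algebraMap ℤ ℂ) c1 = ((c1 : ℚ) : ℂ) by push_cast; simp]; exact e1
    have e0' : (algebraMap ℤ ℂ) c0 = (n : ℂ) ^ 2 * (a : ℂ) := by
      rw [show (algebraMap ℤ ℂ) c0 = ((c0 : ℚ) : ℂ) by push_cast; simp]; exact e0
    rw [e1', e0']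
    linear_combination (n : ℂ) ^ 2 * hab

lemma stmt2_covering (hO : O = {z : ℂ | z ∈ K ∧ IsIntegral ℤ z})
    (hwK : w ∈ K)
    (hrep : ∀ z ∈ K, ∃ p q : ℚ, z = (p : ℂ) + (q : ℂ) * w)
    {n : ℤ} (hn1 : 1 ≤ n) (hint : IsIntegral ℤ ((n : ℂ) * w)) :
    ∃ C : ℝ, ∀ x ∈ K, ∃ c ∈ O, normSq (x - c) ≤ C := by
  set ω : ℂ := (n : ℂ) * w with hω
  have hωK : ω ∈ K := mul_mem (intCast_mem K n) hwK
  refine ⟨((1 + ‖ω‖) / 2) ^ 2, ?_⟩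
  intro x hx
  obtain ⟨p, q, hpq⟩ := hrep x hx
  set k : ℤ := round (q / (n : ℚ)) with hk
  set j : ℤ := round (p : ℚ) with hj
  refine ⟨(j : ℂ) + (k : ℂ) * ω, ?_, ?_⟩
  · rw [hO]
    constructor
    · exact add_mem (intCast_mem K j)
        (mul_mem (intCast_mem K k) hωK)
    · exact (isIntegral_algebraMap (x := j)).add ((isIntegral_algebraMap (x := k)).mul hint)
  · have hne : ((n : ℚ)) ≠ 0 := by positivity
    have hxc : x - ((j : ℂ) + (k : ℂ) * ω) =
        ((p : ℚ) - (j : ℤ) : ℚ) + ((q / (n : ℚ) - (k : ℤ) : ℚ)) * ω := by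
      have hnC : (n : ℂ) ≠ 0 := by
        have : n ≠ 0 := by omega
        exact_mod_cast this
      rw [hpq, hω]
      push_cast
      field_simp
      ring
    rw [hxc]
    have h1 : |((p : ℚ) - j : ℚ)| ≤ 1 / 2 := by rw [hj]; exact abs_sub_round p
    have h2 : |((q / (n : ℚ) - k : ℚ))| ≤ 1 / 2 := by rw [hk]; exact abs_sub_round _
    have habs : ‖((p - j : ℚ) : ℂ) + ((q / (n : ℚ) - k : ℚ) : ℂ) * ω‖
        ≤ (1 + ‖ω‖) / 2 := by
      calc ‖((p - j : ℚ) : ℂ) + ((q / (n : ℚ) - k : ℚ) : ℂ) * ω‖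
          ≤ ‖((p - j : ℚ) : ℂ)‖ + ‖((q / (n : ℚ) - k : ℚ) : ℂ) * ω‖ :=
            norm_add_le _ _
        _ = ((|((p : ℚ) - j : ℚ)| : ℚ) : ℝ) + ((|((q / (n : ℚ) - k : ℚ))| : ℚ) : ℝ) * ‖ω‖ := by
            rw [norm_mul]
            congr 1
            · norm_cast
            · congr 1
              norm_cast
        _ ≤ 1 / 2 + (1 / 2) * ‖ω‖ := by
            have h0 : (0:ℝ) ≤ ‖ω‖ := norm_nonneg _
            have h1' : ((|((p : ℚ) - j : ℚ)| : ℚ) : ℝ) ≤ 1 / 2 := by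
              rw [show (1/2 : ℝ) = ((1/2 : ℚ) : ℝ) by norm_num]
              exact_mod_cast h1
            have h2' : ((|((q / (n : ℚ) - k : ℚ))| : ℚ) : ℝ) ≤ 1 / 2 := by
              rw [show (1/2 : ℝ) = ((1/2 : ℚ) : ℝ) by norm_num]
              exact_mod_cast h2
            nlinarith
        _ = (1 + ‖ω‖) / 2 := by ring
    have := Complex.sq_norm (((p - j : ℚ) : ℂ) + ((q / (n : ℚ) - k : ℚ) : ℂ) * ω)
    rw [← this]
    have h0 : (0:ℝ) ≤ ‖((p - j : ℚ) : ℂ) + ((q / (n : ℚ) - k : ℚ) : ℂ) * ω‖ :=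
      norm_nonneg _
    nlinarith

lemma stmt2_division (hO : O = {z : ℂ | z ∈ K ∧ IsIntegral ℤ z})
    (hμ : (⨆ x : K, ⨅ a : O, Complex.normSq ((x : ℂ) - (a : ℂ))) = μ)
    {C : ℝ} (hcov : ∀ x ∈ K, ∃ c ∈ O, normSq (x - c) ≤ C) :
    ∀ x ∈ K, ∀ ε > 0, ∃ c ∈ O, normSq (x - c) < μ + ε := by
  have h0O : (0:ℂ) ∈ O := by rw [hO]; exact ⟨zero_mem K, isIntegral_zero⟩
  have : Nonempty O := ⟨⟨0, h0O⟩⟩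
  set F : K → ℝ := fun x => ⨅ a : O, Complex.normSq ((x : ℂ) - (a : ℂ)) with hF
  have hbdd : ∀ x : K, BddBelow (Set.range fun a : O => Complex.normSq ((x : ℂ) - (a : ℂ))) := by
    intro x
    exact ⟨0, fun y ⟨a, ha⟩ => ha ▸ Complex.normSq_nonneg _⟩
  have hFleC : ∀ x : K, F x ≤ C := by
    intro x
    obtain ⟨c, hcO, hc⟩ := hcov (x : ℂ) x.2
    exact le_trans (ciInf_le (hbdd x) ⟨c, hcO⟩) hc
  have hFbdd : BddAbove (Set.range F) := ⟨C, fun y ⟨x, hx⟩ => hx ▸ hFleC x⟩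
  intro x hx ε hε
  have hle : F ⟨x, hx⟩ ≤ μ := hμ ▸ le_ciSup hFbdd ⟨x, hx⟩
  have hlt : F ⟨x, hx⟩ < μ + ε := lt_of_le_of_lt hle (by linarith)
  obtain ⟨a, ha⟩ := exists_lt_of_ciInf_lt hlt
  exact ⟨(a : ℂ), a.2, ha⟩

lemma stmt2_bezout (hO : O = {z : ℂ | z ∈ K ∧ IsIntegral ℤ z})
    (hdiv : ∀ x ∈ K, ∃ c ∈ O, normSq (x - c) < 1)
    (hNint : ∀ z ∈ O, ∃ N : ℤ, (normSq z : ℝ) = N) :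
    ∀ v0 ∈ O, ∀ v1 ∈ O, ∃ s ∈ O, ∃ t ∈ O, ∃ e ∈ O, ∃ f ∈ O,
      v0 = (s * v0 + t * v1) * e ∧ v1 = (s * v0 + t * v1) * f := by
  have hOK : ∀ z ∈ O, z ∈ K := fun z hz => (hO ▸ hz).1
  have h0 : (0:ℂ) ∈ O := by rw [hO]; exact ⟨zero_mem K, isIntegral_zero⟩
  have h1 : (1:ℂ) ∈ O := by rw [hO]; exact ⟨one_mem K, isIntegral_one⟩
  have hadd : ∀ x ∈ O, ∀ y ∈ O, x + y ∈ O := by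
    rw [hO]; exact fun x hx y hy => ⟨add_mem hx.1 hy.1, hx.2.add hy.2⟩
  have hmul : ∀ x ∈ O, ∀ y ∈ O, x * y ∈ O := by
    rw [hO]; exact fun x hx y hy => ⟨mul_mem hx.1 hy.1, hx.2.mul hy.2⟩
  have hneg : ∀ x ∈ O, -x ∈ O := by
    rw [hO]; exact fun x hx => ⟨neg_mem hx.1, hx.2.neg⟩
  have hsub : ∀ x ∈ O, ∀ y ∈ O, x - y ∈ O := fun x hx y hy => by
    rw [sub_eq_add_neg]; exact hadd x hx _ (hneg y hy)
  have key : ∀ n : ℕ, ∀ v0 ∈ O, ∀ v1 ∈ O, normSq v1 = (n : ℝ) →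
      ∃ s ∈ O, ∃ t ∈ O, ∃ e ∈ O, ∃ f ∈ O,
      v0 = (s * v0 + t * v1) * e ∧ v1 = (s * v0 + t * v1) * f := by
    intro n
    induction n using Nat.strong_induction_on with
    | _ n ih =>
      intro v0 hv0 v1 hv1 hn
      by_cases hz : v1 = 0
      · subst hz
        exact ⟨1, h1, 0, h0, 1, h1, 0, h0, by ring, by ring⟩
      · have hv1K := hOK v1 hv1
        have hv1ne : (v1 : ℂ) ≠ 0 := hz
        have hxK : v0 / v1 ∈ K := div_mem (hOK v0 hv0) hv1K
        obtain ⟨c, hcO, hc⟩ := hdiv _ hxK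
        set r : ℂ := v0 - c * v1 with hr
        have hrO : r ∈ O := hsub v0 hv0 _ (hmul c hcO v1 hv1)
        have hrfact : r = (v0 / v1 - c) * v1 := by rw [hr]; field_simp
        have hrlt : normSq r < normSq v1 := by
          rw [hrfact, normSq_mul]
          have hpos : 0 < normSq v1 := normSq_pos.mpr hv1ne
          nlinarith [normSq_nonneg (v0 / v1 - c)]
        obtain ⟨N, hN⟩ := hNint r hrO
        have hN0 : 0 ≤ N := by
          have := normSq_nonneg r
          exact_mod_cast hN ▸ this
        have hNr : ((N.toNat : ℕ) : ℝ) = normSq r := by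
          rw [hN]; exact_mod_cast Int.toNat_of_nonneg hN0
        have hmlt : N.toNat < n := by
          have : ((N.toNat : ℕ) : ℝ) < (n : ℝ) := by rw [hNr, ← hn]; exact hrlt
          exact_mod_cast this
        obtain ⟨s, hs, t, ht, e, he, f, hf, hv1eq, hreq⟩ :=
          ih N.toNat hmlt v1 hv1 r hrO hNr.symm
        refine ⟨t, ht, s - t * c, hsub s hs _ (hmul t ht c hcO), f + c * e,
          hadd f hf _ (hmul c hcO e he), e, he, ?_, ?_⟩
        · have : t * v0 + (s - t * c) * v1 = s * v1 + t * r := by rw [hr]; ring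
          rw [this]
          calc v0 = r + c * v1 := by rw [hr]; ring
            _ = (s * v1 + t * r) * f + c * ((s * v1 + t * r) * e) := by rw [← hreq, ← hv1eq]
            _ = (s * v1 + t * r) * (f + c * e) := by ring
        · have : t * v0 + (s - t * c) * v1 = s * v1 + t * r := by rw [hr]; ring
          rw [this, ← hv1eq]
  intro v0 hv0 v1 hv1
  obtain ⟨N, hN⟩ := hNint v1 hv1
  have hN0 : 0 ≤ N := by
    have := normSq_nonneg v1
    exact_mod_cast hN ▸ this
  have hNr : ((N.toNat : ℕ) : ℝ) = normSq v1 := by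
    rw [hN]; exact_mod_cast Int.toNat_of_nonneg hN0
  exact key N.toNat v0 hv0 v1 hv1 hNr.symm

lemma stmt2_expand2 (G : Matrix (Fin 2) (Fin 2) ℂ) (v u : Fin 2 → ℂ) :
    star v ⬝ᵥ G.mulVec u = (starRingEnd ℂ) (v 0) * (G 0 0 * u 0 + G 0 1 * u 1)
      + (starRingEnd ℂ) (v 1) * (G 1 0 * u 0 + G 1 1 * u 1) := by
  simp [dotProduct, Matrix.mulVec, Fin.sum_univ_two, Pi.star_apply, RingHom.coe_comp]

end AuxStmt2

theorem stmt2 (K : Subfield ℂ)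
    (hdeg : Module.finrank ℚ K = 2)
    (himag : ¬ (K : Set ℂ) ⊆ Set.range (Complex.ofReal))
    (O : Set ℂ) (hO : O = {z : ℂ | z ∈ K ∧ IsIntegral ℤ z})
    (μ : ℝ) (hμlt : μ < 1)
    (hμ : (⨆ x : K, ⨅ a : O, Complex.normSq ((x : ℂ) - (a : ℂ))) = μ)
    (G : Matrix (Fin 2) (Fin 2) ℂ) (hGK : ∀ i j, G i j ∈ K) (hG : G.PosDef)
    (m : ℝ)
    (hm : IsLeast {x : ℝ | ∃ v : Fin 2 → ℂ, (∀ i, v i ∈ O) ∧ v ≠ 0 ∧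
      (star v ⬝ᵥ G.mulVec v).re = x} m) :
    m ^ 2 * (1 - μ) ≤ (G.det).re := by
  obtain ⟨w, hwK, hwim, hrep⟩ := stmt2_Kbasis K hdeg himag
  obtain ⟨aq, bq, hab⟩ : ∃ p q : ℚ, w ^ 2 = (p : ℂ) + (q : ℂ) * w := hrep _ (pow_mem hwK 2)
  have hcw := stmt2_conj_w hwim hab
  have hconjK : ∀ z ∈ K, (starRingEnd ℂ) z ∈ K := fun z hz => stmt2_conj_mem hwK hcw hrep hz
  have hOK : ∀ z ∈ O, z ∈ K := fun z hz => (hO ▸ hz).1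
  have hmulO : ∀ x ∈ O, ∀ y ∈ O, x * y ∈ O := by
    rw [hO]; exact fun x hx y hy => ⟨mul_mem hx.1 hy.1, hx.2.mul hy.2⟩
  have hsubO : ∀ x ∈ O, ∀ y ∈ O, x - y ∈ O := by
    rw [hO]; exact fun x hx y hy => ⟨sub_mem hx.1 hy.1, hx.2.sub hy.2⟩
  have hnegO : ∀ x ∈ O, -x ∈ O := by
    rw [hO]; exact fun x hx => ⟨neg_mem hx.1, hx.2.neg⟩
  have hNint : ∀ z ∈ O, ∃ N : ℤ, normSq z = (N : ℝ) := fun z hz =>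
    stmt2_normSq_int hO hwim hwK hcw hrep hz
  obtain ⟨n, hn1, hnint⟩ := stmt2_omega_integral hab
  obtain ⟨C, hcov⟩ := stmt2_covering hO hwK hrep hn1 hnint
  have hdivμ := stmt2_division hO hμ hcov
  have hdiv1 : ∀ x ∈ K, ∃ c ∈ O, normSq (x - c) < 1 := by
    intro x hx
    obtain ⟨c, hcO, hc⟩ := hdivμ x hx ((1 - μ)/2) (by linarith)
    exact ⟨c, hcO, by linarith⟩
  -- minimal vector
  obtain ⟨v, hvO, hvne, hvm⟩ := hm.1
  have hml : ∀ u : Fin 2 → ℂ, (∀ i, u i ∈ O) → u ≠ 0 →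
      m ≤ (star u ⬝ᵥ G.mulVec u).re := fun u hu hune => hm.2 ⟨u, hu, hune, rfl⟩
  have hmpos : 0 < m := by
    have := hG.dotProduct_mulVec_pos hvne
    rw [Complex.lt_def] at this
    rw [← hvm]
    simpa using this.1
  -- Bezout
  obtain ⟨s, hs, t, ht, e, he, f, hf, hv0, hv1⟩ := stmt2_bezout hO hdiv1 hNint (v 0) (hvO 0) (v 1) (hvO 1)
  set d : ℂ := s * v 0 + t * v 1 with hd
  have hdne : d ≠ 0 := by
    intro h
    apply hvne
    funext i
    fin_cases i
    · simpa [h] using hv0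
    · simpa [h] using hv1
  have hdet1 : s * e + t * f = 1 := by
    have h2 : d * (s * e + t * f) = d * 1 := by
      conv_rhs => rw [mul_one, hd, hv0, hv1]
      ring
    exact mul_left_cancel₀ hdne h2
  set c₁ : Fin 2 → ℂ := ![e, f] with hc₁
  set c₂ : Fin 2 → ℂ := ![-t, s] with hc₂
  have hc₁O : ∀ i, c₁ i ∈ O := by
    intro i; fin_cases i <;> simpa [hc₁] using ‹_›
  have hc₂O : ∀ i, c₂ i ∈ O := by
    intro i
    fin_cases i
    · simpa [hc₂] using hnegO t ht
    · simpa [hc₂] using hs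
  have hc₁ne : c₁ ≠ 0 := by
    intro h
    have h0 : e = 0 := by simpa [hc₁] using congrFun h 0
    have h1 : f = 0 := by simpa [hc₁] using congrFun h 1
    rw [h0, h1] at hdet1
    simp at hdet1
  -- h11 = m
  set h11 : ℂ := star c₁ ⬝ᵥ G.mulVec c₁ with hh11
  have hvdc : v = fun i => d * c₁ i := by
    funext i
    fin_cases i
    · simpa [hc₁] using hv0
    · simpa [hc₁] using hv1
  have hvh : star v ⬝ᵥ G.mulVec v = ((normSq d : ℝ) : ℂ) * h11 := by
    rw [hh11, stmt2_expand2, stmt2_expand2, hvdc]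
    simp only [_root_.map_mul]
    rw [← Complex.mul_conj d]
    ring
  have h11pos := hG.dotProduct_mulVec_pos hc₁ne
  rw [Complex.lt_def] at h11pos
  have h11im : h11.im = 0 := by rw [hh11]; exact h11pos.2.symm
  have h11repos : 0 < h11.re := by rw [hh11]; simpa using h11pos.1
  have hmrel : m = normSq d * h11.re := by
    rw [← hvm, hvh]
    simp
  have haddO : ∀ x ∈ O, ∀ y ∈ O, x + y ∈ O := by
    rw [hO]; exact fun x hx y hy => ⟨add_mem hx.1 hy.1, hx.2.add hy.2⟩
  have hdO : d ∈ O := haddO _ (hmulO s hs _ (hvO 0)) _ (hmulO t ht _ (hvO 1))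
  have hNge1 : ∀ z ∈ O, z ≠ 0 → 1 ≤ normSq z := by
    intro z hz hzne
    obtain ⟨N, hN⟩ := hNint z hz
    have hpos : 0 < normSq z := normSq_pos.mpr hzne
    have : (0 : ℝ) < (N : ℝ) := hN ▸ hpos
    have hN1 : (1 : ℤ) ≤ N := by exact_mod_cast this
    rw [hN]
    exact_mod_cast hN1
  have hNd1 : 1 ≤ normSq d := hNge1 d hdO hdne
  have h11rem : h11.re = m := by
    have hge : m ≤ h11.re := hml c₁ hc₁O hc₁ne
    nlinarith
  have h11m : h11 = ((m : ℝ) : ℂ) := by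
    apply Complex.ext
    · simpa using h11rem
    · simpa using h11im
  have heK : e ∈ K := hOK e he
  have hfK : f ∈ K := hOK f hf
  have hsK : s ∈ K := hOK s hs
  have htK : t ∈ K := hOK t ht
  set α : ℂ := star c₁ ⬝ᵥ G.mulVec c₂ with hα
  have hαK : α ∈ K := by
    rw [hα, stmt2_expand2]
    simp only [hc₁, hc₂, Matrix.cons_val_zero, Matrix.cons_val_one, Matrix.head_cons]
    exact add_mem
      (mul_mem (hconjK e heK) (add_mem (mul_mem (hGK 0 0) (neg_mem htK)) (mul_mem (hGK 0 1) hsK)))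
      (mul_mem (hconjK f hfK) (add_mem (mul_mem (hGK 1 0) (neg_mem htK)) (mul_mem (hGK 1 1) hsK)))
  have hmK : ((m : ℝ) : ℂ) ∈ K := by
    rw [← h11m, hh11, stmt2_expand2]
    simp only [hc₁, Matrix.cons_val_zero, Matrix.cons_val_one, Matrix.head_cons]
    exact add_mem
      (mul_mem (hconjK e heK) (add_mem (mul_mem (hGK 0 0) heK) (mul_mem (hGK 0 1) hfK)))
      (mul_mem (hconjK f hfK) (add_mem (mul_mem (hGK 1 0) heK) (mul_mem (hGK 1 1) hfK)))
  have hmne : ((m : ℝ) : ℂ) ≠ 0 := by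
    simpa using hmpos.ne'
  set x : ℂ := α / ((m : ℝ) : ℂ) with hx
  have hxK : x ∈ K := div_mem hαK hmK
  have hherm := hG.1
  have hg00 : (starRingEnd ℂ) (G 0 0) = G 0 0 := by
    have := congrFun (congrFun hherm 0) 0
    simpa [Matrix.conjTranspose_apply] using this
  have hg11 : (starRingEnd ℂ) (G 1 1) = G 1 1 := by
    have := congrFun (congrFun hherm 1) 1
    simpa [Matrix.conjTranspose_apply] using this
  have hg01 : (starRingEnd ℂ) (G 0 1) = G 1 0 := by
    have := congrFun (congrFun hherm 1) 0
    simpa [Matrix.conjTranspose_apply] using this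
  have hg10 : (starRingEnd ℂ) (G 1 0) = G 0 1 := by
    have := congrFun (congrFun hherm 0) 1
    simpa [Matrix.conjTranspose_apply] using this
  set β : ℂ := star c₂ ⬝ᵥ G.mulVec c₁ with hβ
  have hβα : β = (starRingEnd ℂ) α := by
    rw [hβ, hα, stmt2_expand2, stmt2_expand2]
    simp only [hc₁, hc₂, Matrix.cons_val_zero, Matrix.cons_val_one, Matrix.head_cons,
      map_add, _root_.map_mul, map_neg, hg00, hg11, hg01, hg10, Complex.conj_conj]
    ring
  have hdetid : h11 * (star c₂ ⬝ᵥ G.mulVec c₂) - α * β = G.det := by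
    have hdet1' : (starRingEnd ℂ) (s * e + t * f) = 1 := by rw [hdet1]; simp
    have expand : h11 * (star c₂ ⬝ᵥ G.mulVec c₂) - α * β
        = G.det * ((s * e + t * f) * (starRingEnd ℂ) (s * e + t * f)) := by
      rw [hh11, hα, hβ, stmt2_expand2, stmt2_expand2, stmt2_expand2, stmt2_expand2,
        Matrix.det_fin_two]
      simp only [hc₁, hc₂, Matrix.cons_val_zero, Matrix.cons_val_one, Matrix.head_cons,
        map_add, _root_.map_mul, map_neg]
      ring
    rw [expand, hdet1]
    simp
  have hfin : ∀ ε > 0, m ^ 2 * (1 - μ) ≤ (G.det).re + ε * m ^ 2 := by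
    intro ε hε
    obtain ⟨c, hcO, hcx⟩ := hdivμ x hxK ε hε
    set u : Fin 2 → ℂ := fun i => c₂ i - c * c₁ i with hu
    have huO : ∀ i, u i ∈ O := fun i => hsubO _ (hc₂O i) _ (hmulO c hcO _ (hc₁O i))
    have hune : u ≠ 0 := by
      intro h
      have h0 : -t - c * e = 0 := by simpa [hu, hc₁, hc₂] using congrFun h 0
      have h1 : s - c * f = 0 := by simpa [hu, hc₁, hc₂] using congrFun h 1
      have : (1 : ℂ) = 0 := by
        rw [← hdet1]
        linear_combination e * h1 - f * h0
      simp at this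
    have humin : m ≤ (star u ⬝ᵥ G.mulVec u).re := hml u huO hune
    have hmain : ((m : ℝ) : ℂ) * (star u ⬝ᵥ G.mulVec u)
        = G.det + (α - c * ((m : ℝ) : ℂ)) * (starRingEnd ℂ) (α - c * ((m : ℝ) : ℂ)) := by
      have hxu : star u ⬝ᵥ G.mulVec u
          = (star c₂ ⬝ᵥ G.mulVec c₂) - c * β - (starRingEnd ℂ) c * α
            + (starRingEnd ℂ) c * c * h11 := by
        rw [hh11, hα, hβ]
        simp only [stmt2_expand2]
        simp only [hu, hc₁, hc₂, Matrix.cons_val_zero, Matrix.cons_val_one, Matrix.head_cons,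
          map_sub, map_add, _root_.map_mul, map_neg]
        ring
      rw [hxu, hβα, h11m]
      rw [← hdetid, hβα, h11m]
      simp only [map_sub, _root_.map_mul, Complex.conj_conj, Complex.conj_ofReal]
      ring
    have hre : m * (star u ⬝ᵥ G.mulVec u).re
        = (G.det).re + normSq (α - c * ((m : ℝ) : ℂ)) := by
      have h5 := congrArg Complex.re hmain
      rw [Complex.mul_conj] at h5
      simpa using h5
    have hfact : α - c * ((m : ℝ) : ℂ) = (x - c) * ((m : ℝ) : ℂ) := by
      rw [hx]
      field_simp
    have hnsq : normSq (α - c * ((m : ℝ) : ℂ)) = normSq (x - c) * m ^ 2 := by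
      rw [hfact, normSq_mul, Complex.normSq_ofReal]
      ring
    have hsq : normSq (x - c) * m ^ 2 ≤ (μ + ε) * m ^ 2 := by
      have hm2 : 0 ≤ m ^ 2 := sq_nonneg m
      nlinarith [hcx]
    have hmm : m * m ≤ m * (star u ⬝ᵥ G.mulVec u).re :=
      mul_le_mul_of_nonneg_left humin (le_of_lt hmpos)
    rw [hre, hnsq] at hmm
    nlinarith
  by_contra hcon
  push_neg at hcon
  set δ : ℝ := (m ^ 2 * (1 - μ) - (G.det).re) with hδ
  have hδpos : 0 < δ := by rw [hδ]; linarith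
  have hm2pos : 0 < m ^ 2 := by positivity
  have hfε := hfin (δ / (2 * m ^ 2)) (by positivity)
  have heq : δ / (2 * m ^ 2) * m ^ 2 = δ / 2 := by field_simp
  linarith
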